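/- Let p̂ satisfy c/(β^{d/2}‖θ‖^d) ≤ p̂(θ) ≤ C/(β^{d/2}‖θ‖^d) on [-π,π]^d \ {0} (i.e. r = d). Then S(2π/L) and S(4π/L) both scale as (log L)/β^{d/2}: there exist constants c', C' > 0 and L̄ such that c'·(log L)/β^{d/2} ≤ S(4π/L) ≤ S(2π/L) ≤ C'·(log L)/β^{d/2} for all L ≥ L̄. -/

import Mathlib

open MeasureTheory Set

lemma aux_integrableOn {X : Type*} [MeasurableSpace X] {μ : Measure X} {f : X → ℝ}
    (hf : Measurable f) {s : Set X} (hs : MeasurableSet s) (hvol : μ s < ⊤) {M : ℝ}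
    (hM : ∀ x ∈ s, |f x| ≤ M) : IntegrableOn f s μ := by
  refine Integrable.mono' (g := fun _ => M) (integrableOn_const hvol.ne) hf.aestronglyMeasurable.restrict ?_
  refine (ae_restrict_iff' hs).2 (ae_of_all _ fun x hx => ?_)
  simpa [Real.norm_eq_abs] using hM x hx

lemma aux_upper {X : Type*} [MeasurableSpace X] {μ : Measure X} {f : X → ℝ}
    {s : Set X} (hs : MeasurableSet s) (hvol : μ s < ⊤) {M : ℝ}
    (hM : ∀ x ∈ s, |f x| ≤ M) : ∫ x in s, f x ∂μ ≤ M * (μ s).toReal := by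
  calc ∫ x in s, f x ∂μ ≤ |∫ x in s, f x ∂μ| := le_abs_self _
  _ ≤ M * (μ s).toReal := by
      rw [← Real.norm_eq_abs]
      exact norm_setIntegral_le_of_norm_le_const hvol
        (fun x hx => by simpa [Real.norm_eq_abs] using hM x hx)

lemma ann_eq {a b : ℝ} (ha : 0 < a) :
    {t : ℝ | a ≤ |t| ∧ |t| < b} = Ioc (-b) (-a) ∪ Ico a b := by
  ext t
  simp only [mem_setOf_eq, mem_union, mem_Ioc, mem_Ico]
  rcases le_or_gt 0 t with h | h
  · rw [abs_of_nonneg h]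
    constructor
    · exact fun h' => Or.inr h'
    · rintro (⟨h1, h2⟩ | h')
      · linarith
      · exact h'
  · rw [abs_of_neg h]
    constructor
    · rintro ⟨h1, h2⟩; exact Or.inl ⟨by linarith, by linarith⟩
    · rintro (⟨h1, h2⟩ | ⟨h1, h2⟩)
      · exact ⟨by linarith, by linarith⟩
      · linarith

lemma ann_meas {a b : ℝ} (ha : 0 < a) : MeasurableSet {t : ℝ | a ≤ |t| ∧ |t| < b} := by
  rw [ann_eq ha]; exact measurableSet_Ioc.union measurableSet_Ico

lemma ann_vol {a b : ℝ} (ha : 0 < a) (hab : a ≤ b) :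
    volume {t : ℝ | a ≤ |t| ∧ |t| < b} = ENNReal.ofReal (2 * (b - a)) := by
  rw [ann_eq ha, measure_union ?_ measurableSet_Ico, Real.volume_Ioc, Real.volume_Ico,
    show -a - -b = b - a by ring, ← ENNReal.ofReal_add (by linarith) (by linarith)]
  · congr 1; ring
  · rw [Set.disjoint_left]; rintro t ⟨h1, h2⟩ ⟨h3, h4⟩; linarith

lemma annC_meas {a b : ℝ} : MeasurableSet {t : ℝ | a ≤ |t| ∧ |t| ≤ b} := by
  have : {t : ℝ | a ≤ |t| ∧ |t| ≤ b} = abs ⁻¹' Icc a b := by ext t; simp [mem_Icc]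
  rw [this]
  exact continuous_abs.measurable measurableSet_Icc

set_option maxHeartbeats 2000000 in
theorem stmt_8 (d : ℕ) (hd : 1 ≤ d) (c C : ℝ) (hc : 0 < c) (hcC : c ≤ C) :
    ∃ c' C' : ℝ, 0 < c' ∧ 0 < C' ∧ ∃ L0 : ℕ, ∀ β : ℝ, 0 < β →
      ∀ p : (Fin d → ℝ) → ℝ, Measurable p →
      (∀ θ : Fin d → ℝ, θ ≠ 0 → (∀ i, |θ i| ≤ Real.pi) →
        c / (β ^ ((d : ℝ) / 2) * Real.sqrt (∑ i, (θ i) ^ 2) ^ d) ≤ p θ ∧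
        p θ ≤ C / (β ^ ((d : ℝ) / 2) * Real.sqrt (∑ i, (θ i) ^ 2) ^ d)) →
      ∀ L : ℕ, L0 ≤ L →
        c' * Real.log L / β ^ ((d : ℝ) / 2) ≤
          (∫ θ in {θ : Fin d → ℝ | ∀ i, 4 * Real.pi / L ≤ |θ i| ∧ |θ i| ≤ Real.pi}, p θ) ∧
        (∫ θ in {θ : Fin d → ℝ | ∀ i, 4 * Real.pi / L ≤ |θ i| ∧ |θ i| ≤ Real.pi}, p θ) ≤
          (∫ θ in {θ : Fin d → ℝ | ∀ i, 2 * Real.pi / L ≤ |θ i| ∧ |θ i| ≤ Real.pi}, p θ) ∧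
        (∫ θ in {θ : Fin d → ℝ | ∀ i, 2 * Real.pi / L ≤ |θ i| ∧ |θ i| ≤ Real.pi}, p θ) ≤
          C' * Real.log L / β ^ ((d : ℝ) / 2) := by
  have hd0 : (0:ℝ) < d := by exact_mod_cast hd
  have hsd : 0 < Real.sqrt d := Real.sqrt_pos.2 hd0
  have hC0 : 0 < C := lt_of_lt_of_le hc hcC
  refine ⟨c / (2 * (Real.sqrt d) ^ d), 3 * C * 4 ^ d,
    div_pos hc (mul_pos two_pos (pow_pos hsd d)), by positivity, 32, ?_⟩
  intro β hβ p hpm hpbound L hL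
  have hπ := Real.pi_pos
  have hL0 : 0 < L := by omega
  have hLr : (0:ℝ) < L := by exact_mod_cast hL0
  have hL32 : (32:ℝ) ≤ L := by exact_mod_cast hL
  have hβp : 0 < β ^ ((d:ℝ)/2) := Real.rpow_pos_of_pos hβ _
  set B := β ^ ((d:ℝ)/2) with hB
  set a : ℝ := 2 * Real.pi / (L:ℝ) with ha_def
  set Δ : ℝ := 4 * Real.pi / (L:ℝ) with hΔ_def
  have ha : 0 < a := by rw [ha_def]; positivity
  have hΔ : 0 < Δ := by rw [hΔ_def]; positivity
  clear_value B a Δ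
  have i0 : Fin d := ⟨0, hd⟩
  -- norm facts
  have hnorm_ge : ∀ (θ : Fin d → ℝ) (i : Fin d), |θ i| ≤ Real.sqrt (∑ j, (θ j)^2) := by
    intro θ i
    rw [← Real.sqrt_sq_eq_abs]
    exact Real.sqrt_le_sqrt
      (Finset.single_le_sum (fun j _ => sq_nonneg (θ j)) (Finset.mem_univ i))
  have hnorm_le : ∀ (θ : Fin d → ℝ) (b : ℝ), 0 ≤ b → (∀ i, |θ i| ≤ b) →
      Real.sqrt (∑ j, (θ j)^2) ≤ Real.sqrt d * b := by
    intro θ b hb h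
    have h1 : ∑ j, (θ j)^2 ≤ (d:ℝ) * b^2 := by
      calc ∑ j, (θ j)^2 ≤ ∑ _j : Fin d, b^2 :=
            Finset.sum_le_sum (fun j _ => by
              rw [← sq_abs]; exact pow_le_pow_left₀ (abs_nonneg _) (h j) 2)
      _ = (d:ℝ) * b^2 := by simp [Finset.sum_const, nsmul_eq_mul]
    calc Real.sqrt (∑ j, (θ j)^2) ≤ Real.sqrt ((d:ℝ) * b^2) := Real.sqrt_le_sqrt h1
    _ = Real.sqrt d * b := by rw [Real.sqrt_mul hd0.le, Real.sqrt_sq hb]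
  -- pointwise sandwich consequences
  have hne_of : ∀ (b : ℝ), 0 < b → ∀ θ : Fin d → ℝ, (∃ i, b ≤ |θ i|) → θ ≠ 0 := by
    rintro b hb θ ⟨i, hi⟩ h0
    rw [h0] at hi; simp at hi; linarith
  have hp_bounds : ∀ (b : ℝ), 0 < b → ∀ θ : Fin d → ℝ, (∀ i, |θ i| ≤ Real.pi) →
      (∃ i, b ≤ |θ i|) → 0 ≤ p θ ∧ p θ ≤ C / (B * b ^ d) := by
    intro b hb θ hθπ hex
    obtain ⟨i, hi⟩ := hex
    obtain ⟨hlow, hhigh⟩ := hpbound θ (hne_of b hb θ ⟨i, hi⟩) hθπ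
    have hnθ : b ≤ Real.sqrt (∑ j, (θ j)^2) := le_trans hi (hnorm_ge θ i)
    have hnθ0 : 0 < Real.sqrt (∑ j, (θ j)^2) := lt_of_lt_of_le hb hnθ
    constructor
    · refine le_trans ?_ hlow
      positivity
    · refine le_trans hhigh ?_
      gcongr
  have hp_lower : ∀ (b u : ℝ), 0 < b → ∀ θ : Fin d → ℝ, (∀ i, |θ i| ≤ Real.pi) →
      (∃ i, b ≤ |θ i|) → (∀ i, |θ i| ≤ u) →
      c / (B * (Real.sqrt d * u) ^ d) ≤ p θ := by
    intro b u hb θ hθπ hex hu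
    obtain ⟨i, hi⟩ := hex
    obtain ⟨hlow, _⟩ := hpbound θ (hne_of b hb θ ⟨i, hi⟩) hθπ
    refine le_trans ?_ hlow
    have hnθ0 : 0 < Real.sqrt (∑ j, (θ j)^2) :=
      lt_of_lt_of_le hb (le_trans hi (hnorm_ge θ i))
    have h1 : Real.sqrt (∑ j, (θ j)^2) ≤ Real.sqrt d * u :=
      hnorm_le θ u (le_trans (abs_nonneg _) (hu i)) hu
    gcongr
  -- measurability and volume of the A-sets
  have hAeq : ∀ b : ℝ, {θ : Fin d → ℝ | ∀ i, b ≤ |θ i| ∧ |θ i| ≤ Real.pi}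
      = Set.pi univ (fun _ => {t : ℝ | b ≤ |t| ∧ |t| ≤ Real.pi}) := by
    intro b; ext θ; simp [Set.mem_pi]
  have hAmeas : ∀ b : ℝ, MeasurableSet {θ : Fin d → ℝ | ∀ i, b ≤ |θ i| ∧ |θ i| ≤ Real.pi} := by
    intro b; rw [hAeq]; exact MeasurableSet.univ_pi (fun _ => annC_meas)
  have hAvol : ∀ b : ℝ, volume {θ : Fin d → ℝ | ∀ i, b ≤ |θ i| ∧ |θ i| ≤ Real.pi} < ⊤ := by
    intro b
    calc volume {θ : Fin d → ℝ | ∀ i, b ≤ |θ i| ∧ |θ i| ≤ Real.pi}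
        ≤ volume (Set.pi univ fun _ : Fin d => Icc (-Real.pi) Real.pi) := by
          refine measure_mono ?_
          rw [hAeq]
          exact Set.pi_mono fun i _ => fun t ht => mem_Icc.2 (abs_le.1 ht.2)
    _ < ⊤ := by
        rw [volume_pi_pi]
        simp only [Real.volume_Icc, Finset.prod_const, Finset.card_univ, Fintype.card_fin]
        exact ENNReal.pow_lt_top ENNReal.ofReal_lt_top
  have hpintA : ∀ b : ℝ, 0 < b →
      IntegrableOn p {θ : Fin d → ℝ | ∀ i, b ≤ |θ i| ∧ |θ i| ≤ Real.pi} := by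
    intro b hb
    refine aux_integrableOn hpm (hAmeas b) (hAvol b) (M := C / (B * b ^ d)) ?_
    intro θ hθ
    obtain ⟨h0, h1⟩ := hp_bounds b hb θ (fun i => (hθ i).2) ⟨i0, (hθ i0).1⟩
    rw [abs_of_nonneg h0]; exact h1
  -- the middle inequality
  have haΔ : a ≤ Δ := by
    rw [ha_def, hΔ_def]
    gcongr
    linarith
  have hsub42 : {θ : Fin d → ℝ | ∀ i, Δ ≤ |θ i| ∧ |θ i| ≤ Real.pi}
      ⊆ {θ : Fin d → ℝ | ∀ i, a ≤ |θ i| ∧ |θ i| ≤ Real.pi} :=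
    fun θ hθ i => ⟨le_trans haΔ (hθ i).1, (hθ i).2⟩
  have hp_nonneg_ae : ∀ b : ℝ, 0 < b →
      0 ≤ᵐ[volume.restrict {θ : Fin d → ℝ | ∀ i, b ≤ |θ i| ∧ |θ i| ≤ Real.pi}] p := by
    intro b hb
    refine (ae_restrict_iff' (hAmeas b)).2 (ae_of_all _ fun θ hθ => ?_)
    exact (hp_bounds b hb θ (fun i => (hθ i).2) ⟨i0, (hθ i0).1⟩).1
  have hmid : (∫ θ in {θ : Fin d → ℝ | ∀ i, Δ ≤ |θ i| ∧ |θ i| ≤ Real.pi}, p θ)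
      ≤ ∫ θ in {θ : Fin d → ℝ | ∀ i, a ≤ |θ i| ∧ |θ i| ≤ Real.pi}, p θ :=
    setIntegral_mono_set (hpintA a ha) (hp_nonneg_ae a ha) (HasSubset.Subset.eventuallyLE hsub42)
  -- upper bound
  set K := Nat.log 2 L with hK
  set T : ℕ → Set (Fin d → ℝ) := fun k =>
    {θ : Fin d → ℝ | ∀ i, a ≤ |θ i| ∧ |θ i| ≤ Real.pi}
      ∩ {θ | ∀ i, |θ i| < 2^(k+1) * a} ∩ {θ | ∃ i, 2^k * a ≤ |θ i|} with hT
  have hTmeas : ∀ k, MeasurableSet (T k) := by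
    intro k
    refine ((hAmeas a).inter ?_).inter ?_
    · have he : {θ : Fin d → ℝ | ∀ i, |θ i| < 2^(k+1) * a}
          = Set.pi univ (fun _ => {t : ℝ | |t| < 2^(k+1) * a}) := by
        ext θ; simp [Set.mem_pi]
      rw [he]
      refine MeasurableSet.univ_pi (fun _ => ?_)
      exact continuous_abs.measurable measurableSet_Iio
    · have he : {θ : Fin d → ℝ | ∃ i, 2^k * a ≤ |θ i|}
          = ⋃ i, (fun θ : Fin d → ℝ => θ i) ⁻¹' {t : ℝ | 2^k * a ≤ |t|} := by
        ext θ; simp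
      rw [he]
      exact MeasurableSet.iUnion (fun i =>
        (measurable_pi_apply i) (continuous_abs.measurable measurableSet_Ici))
  have hTsub : ∀ k, T k ⊆ {θ : Fin d → ℝ | ∀ i, a ≤ |θ i| ∧ |θ i| ≤ Real.pi} :=
    fun k θ hθ => hθ.1.1
  have hTk : ∀ k, ∫ θ in T k, p θ ≤ C * 4^d / B := by
    intro k
    have hbk0 : (0:ℝ) < 2^k * a := by positivity
    have hvolT : volume (T k) ≤ ENNReal.ofReal ((4 * (2^k * a))^d) := by
      calc volume (T k)
          ≤ volume (Set.pi univ fun _ : Fin d => Ioo (-(2^(k+1) * a)) (2^(k+1) * a)) := by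
            refine measure_mono ?_
            intro θ hθ
            rw [Set.mem_pi]
            intro i _
            exact mem_Ioo.2 (abs_lt.1 (hθ.1.2 i))
      _ = ENNReal.ofReal ((4 * (2^k * a))^d) := by
            rw [volume_pi_pi]
            simp only [Real.volume_Ioo, Finset.prod_const, Finset.card_univ, Fintype.card_fin]
            rw [show (2:ℝ)^(k+1)*a - -(2^(k+1)*a) = 4*(2^k*a) by rw [pow_succ]; ring,
              ← ENNReal.ofReal_pow (by positivity)]
    have h1 : ∫ θ in T k, p θ ≤ (C / (B * (2^k * a) ^ d)) * (volume (T k)).toReal := by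
      refine aux_upper (hTmeas k) (lt_of_le_of_lt hvolT ENNReal.ofReal_lt_top) ?_
      intro θ hθ
      obtain ⟨hp0, hp1⟩ := hp_bounds (2^k * a) hbk0 θ (fun i => (hθ.1.1 i).2) hθ.2
      rw [abs_of_nonneg hp0]; exact hp1
    refine le_trans h1 ?_
    have h2 : (volume (T k)).toReal ≤ (4 * (2^k * a))^d :=
      ENNReal.toReal_le_of_le_ofReal (by positivity) hvolT
    calc (C / (B * (2^k * a) ^ d)) * (volume (T k)).toReal
        ≤ (C / (B * (2^k * a) ^ d)) * ((4 * (2^k * a))^d) := by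
          refine mul_le_mul_of_nonneg_left h2 (by positivity)
    _ = C * 4^d / B := by
          rw [mul_pow, div_mul_eq_mul_div, div_eq_div_iff (by positivity) (ne_of_gt hβp)]
          ring
  have hTdisj' : ∀ k j, k < j → Disjoint (T k) (T j) := by
    intro k j h
    rw [Set.disjoint_left]
    rintro θ ⟨⟨-, hlt⟩, -⟩ ⟨-, i, hi⟩
    have h2 : (2:ℝ)^(k+1) * a ≤ 2^j * a :=
      mul_le_mul_of_nonneg_right (pow_le_pow_right₀ one_le_two h) ha.le
    have := hlt i
    linarith
  have hTdisj : Set.Pairwise ↑(Finset.range (K+1)) (Function.onFun Disjoint T) := by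
    intro k _ j _ hkj
    rcases lt_or_gt_of_ne hkj with h | h
    · exact hTdisj' k j h
    · exact (hTdisj' j k h).symm
  have hcover : {θ : Fin d → ℝ | ∀ i, a ≤ |θ i| ∧ |θ i| ≤ Real.pi}
      = ⋃ k ∈ Finset.range (K+1), T k := by
    refine Subset.antisymm ?_ (iUnion₂_subset fun k _ => hTsub k)
    intro θ hθ
    obtain ⟨i₀, -, hmax⟩ := Finset.exists_max_image Finset.univ (fun i => |θ i|)
      ⟨i0, Finset.mem_univ _⟩
    have hMa : a ≤ |θ i₀| := (hθ i₀).1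
    have hMπ : |θ i₀| ≤ Real.pi := (hθ i₀).2
    have hM0 : 0 < |θ i₀| := lt_of_lt_of_le ha hMa
    set k := ⌊Real.logb 2 (|θ i₀| / a)⌋₊ with hk
    have h1 : (1:ℝ) ≤ |θ i₀| / a := (one_le_div ha).2 hMa
    have hlogb0 : 0 ≤ Real.logb 2 (|θ i₀| / a) := Real.logb_nonneg one_lt_two h1
    have h2k : (2:ℝ)^k ≤ |θ i₀| / a := by
      have := Real.rpow_le_rpow_of_exponent_le one_le_two (Nat.floor_le hlogb0)
      rwa [Real.rpow_natCast, Real.rpow_logb two_pos (by norm_num) (by positivity)] at this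
    have h2k' : |θ i₀| / a < (2:ℝ)^(k+1) := by
      have := Real.rpow_lt_rpow_of_exponent_lt one_lt_two
        (Nat.lt_floor_add_one (Real.logb 2 (|θ i₀| / a)))
      rw [Real.rpow_logb two_pos (by norm_num) (by positivity)] at this
      rwa [show ((k:ℝ)+1) = ((k+1 : ℕ):ℝ) by push_cast; ring, Real.rpow_natCast] at this
    have hkK : k < K + 1 := by
      have hL2 : |θ i₀| / a ≤ (L:ℝ)/2 := by
        rw [div_le_div_iff₀ ha two_pos, ha_def]
        have hcalc : (L:ℝ) * (2 * Real.pi / L) = 2 * Real.pi := by field_simp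
        rw [hcalc]
        linarith
      have h2K : (L:ℝ)/2 < 2^K := by
        have h3 : L < 2^(K+1) := Nat.lt_pow_succ_log_self (by norm_num) L
        have h4 : (L:ℝ) < 2^(K+1) := by exact_mod_cast h3
        rw [pow_succ] at h4
        linarith
      have h5 : (2:ℝ)^k < 2^K := lt_of_le_of_lt (le_trans h2k hL2) h2K
      by_contra hcon
      push_neg at hcon
      have : (2:ℝ)^K ≤ 2^k := pow_le_pow_right₀ one_le_two (by omega)
      linarith
    refine mem_biUnion (Finset.mem_range.2 hkK) ⟨⟨hθ, fun i => ?_⟩, ⟨i₀, ?_⟩⟩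
    · calc |θ i| ≤ |θ i₀| := hmax i (Finset.mem_univ i)
      _ < 2^(k+1) * a := (div_lt_iff₀ ha).1 h2k'
    · exact (le_div_iff₀ ha).1 h2k
  have hup : (∫ θ in {θ : Fin d → ℝ | ∀ i, a ≤ |θ i| ∧ |θ i| ≤ Real.pi}, p θ)
      ≤ (K+1 : ℝ) * (C * 4^d / B) := by
    rw [hcover, integral_biUnion_finset _ (fun k _ => hTmeas k) hTdisj
      (fun k _ => (hpintA a ha).mono_set (hTsub k))]
    calc ∑ k ∈ Finset.range (K+1), ∫ θ in T k, p θ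
        ≤ ∑ _k ∈ Finset.range (K+1), C * 4^d / B :=
          Finset.sum_le_sum (fun k _ => hTk k)
    _ = (K+1 : ℝ) * (C * 4^d / B) := by
          rw [Finset.sum_const, Finset.card_range, nsmul_eq_mul]
          push_cast
          ring
  have hKlog : (K:ℝ) + 1 ≤ 3 * Real.log L := by
    have h2K : (2:ℝ)^K ≤ L := by exact_mod_cast Nat.pow_log_le_self 2 (by omega)
    have hlog : (K:ℝ) * Real.log 2 ≤ Real.log L := by
      calc (K:ℝ) * Real.log 2 = Real.log ((2:ℝ)^K) := by rw [Real.log_pow]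
      _ ≤ Real.log L := Real.log_le_log (by positivity) h2K
    have hl2 : 0.6931471803 < Real.log 2 := Real.log_two_gt_d9
    have hlogL : Real.log 32 ≤ Real.log L := Real.log_le_log (by norm_num) hL32
    have h32 : Real.log 32 = 5 * Real.log 2 := by
      rw [show (32:ℝ) = 2^5 by norm_num, Real.log_pow]
      push_cast; ring
    nlinarith
  have final_up : (∫ θ in {θ : Fin d → ℝ | ∀ i, a ≤ |θ i| ∧ |θ i| ≤ Real.pi}, p θ)
      ≤ 3 * C * 4^d * Real.log L / B := by
    refine le_trans hup ?_
    calc (K+1 : ℝ) * (C * 4^d / B) ≤ (3 * Real.log L) * (C * 4^d / B) :=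
          mul_le_mul_of_nonneg_right hKlog (by positivity)
    _ = 3 * C * 4^d * Real.log L / B := by ring
  -- lower bound
  set m := K - 2 with hm
  have hK5 : 5 ≤ K := by
    have h32 : Nat.log 2 32 = 5 := Nat.log_eq_of_pow_le_of_lt_pow (by norm_num) (by norm_num)
    calc 5 = Nat.log 2 32 := h32.symm
    _ ≤ Nat.log 2 L := Nat.log_mono_right hL
  have hm2 : m + 2 = K := by omega
  clear_value K m
  set P : ℕ → Set (Fin d → ℝ) := fun k =>
    Set.pi univ (fun _ => {t : ℝ | 2^k * Δ ≤ |t| ∧ |t| < 2^(k+1) * Δ}) with hP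
  have hbkΔ : ∀ k : ℕ, (0:ℝ) < 2^k * Δ := fun k => by positivity
  have hPmeas : ∀ k, MeasurableSet (P k) :=
    fun k => MeasurableSet.univ_pi (fun _ => ann_meas (hbkΔ k))
  have hPvol : ∀ k, volume (P k) = ENNReal.ofReal ((2 * (2^k * Δ))^d) := by
    intro k
    rw [hP]
    simp only
    rw [volume_pi_pi]
    rw [ann_vol (hbkΔ k)
      (mul_le_mul_of_nonneg_right (pow_le_pow_right₀ one_le_two (Nat.le_succ k)) hΔ.le)]
    rw [show (2:ℝ)^(k+1)*Δ - 2^k*Δ = 2^k*Δ by rw [pow_succ]; ring]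
    rw [Finset.prod_const, Finset.card_univ, Fintype.card_fin,
      ← ENNReal.ofReal_pow (by positivity)]
  have hPsubπ : ∀ k, k < m → ∀ t : ℝ, 2^k * Δ ≤ |t| → |t| < 2^(k+1)*Δ →
      Δ ≤ |t| ∧ |t| ≤ Real.pi := by
    intro k hk t h1 h2
    have h2K : (2:ℝ)^K ≤ L := by
      have e := Nat.pow_log_le_self 2 (show L ≠ 0 by omega)
      rw [← hK] at e
      exact_mod_cast e
    constructor
    · refine le_trans ?_ h1
      have e1 : (1:ℝ) ≤ 2^k := one_le_pow₀ one_le_two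
      nlinarith
    · have hklem : (2:ℝ)^(k+1) * Δ ≤ Real.pi := by
        have e1 : (2:ℝ)^(k+1) ≤ 2^m := pow_le_pow_right₀ one_le_two (by omega)
        calc (2:ℝ)^(k+1)*Δ ≤ 2^m * Δ := mul_le_mul_of_nonneg_right e1 hΔ.le
        _ = 2^(m+2) * Real.pi / L := by rw [hΔ_def, pow_add]; ring
        _ = 2^K * Real.pi / L := by rw [hm2]
        _ ≤ Real.pi := by
            rw [div_le_iff₀ hLr]
            nlinarith
      exact le_trans h2.le hklem
  have hPk : ∀ k, k < m → c / (B * (Real.sqrt d)^d) ≤ ∫ θ in P k, p θ := by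
    intro k hk
    have hb0 := hbkΔ k
    have hmem : ∀ θ : Fin d → ℝ, θ ∈ P k → (∀ i, 2^k * Δ ≤ |θ i| ∧ |θ i| < 2^(k+1) * Δ) := by
      intro θ hθ i
      exact hθ i (mem_univ i)
    have hππ : ∀ θ ∈ P k, ∀ i, |θ i| ≤ Real.pi :=
      fun θ hθ i => (hPsubπ k hk (θ i) (hmem θ hθ i).1 (hmem θ hθ i).2).2
    have hlow : ∀ θ ∈ P k, c / (B * (Real.sqrt d * (2^(k+1) * Δ))^d) ≤ p θ :=
      fun θ hθ => hp_lower (2^k * Δ) (2^(k+1) * Δ) hb0 θ (hππ θ hθ)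
        ⟨i0, (hmem θ hθ i0).1⟩ (fun i => (hmem θ hθ i).2.le)
    have hint : IntegrableOn p (P k) := by
      refine aux_integrableOn hpm (hPmeas k) (by rw [hPvol k]; exact ENNReal.ofReal_lt_top)
        (M := C / (B * (2^k * Δ) ^ d)) ?_
      intro θ hθ
      obtain ⟨h0, h1⟩ := hp_bounds (2^k * Δ) hb0 θ (hππ θ hθ) ⟨i0, (hmem θ hθ i0).1⟩
      rw [abs_of_nonneg h0]; exact h1
    have hge := setIntegral_ge_of_const_le_real (hPmeas k)
      (by rw [hPvol k]; exact ENNReal.ofReal_ne_top) hlow hint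
    rw [Measure.real, hPvol k, ENNReal.toReal_ofReal (by positivity)] at hge
    refine le_trans (le_of_eq ?_) hge
    rw [show Real.sqrt d * (2^(k+1) * Δ) = Real.sqrt d * (2 * (2^k * Δ)) by rw [pow_succ]; ring]
    rw [mul_pow (Real.sqrt d), div_mul_eq_mul_div,
      div_eq_div_iff (ne_of_gt (mul_pos hβp (pow_pos hsd d)))
        (ne_of_gt (mul_pos hβp (mul_pos (pow_pos hsd d) (pow_pos (by positivity) d))))]
    ring
  have hPdisj' : ∀ k j, k < j → Disjoint (P k) (P j) := by
    intro k j h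
    rw [Set.disjoint_left]
    intro θ hk' hj'
    have h1 := (hk' i0 (mem_univ i0)).2
    have h2 := (hj' i0 (mem_univ i0)).1
    have h3 : (2:ℝ)^(k+1) * Δ ≤ 2^j * Δ :=
      mul_le_mul_of_nonneg_right (pow_le_pow_right₀ one_le_two h) hΔ.le
    linarith
  have hPdisj : Set.Pairwise ↑(Finset.range m) (Function.onFun Disjoint P) := by
    intro k _ j _ hkj
    rcases lt_or_gt_of_ne hkj with h | h
    · exact hPdisj' k j h
    · exact (hPdisj' j k h).symm
  have hPsub : ∀ k, k < m → P k ⊆ {θ : Fin d → ℝ | ∀ i, Δ ≤ |θ i| ∧ |θ i| ≤ Real.pi} := by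
    intro k hk θ hθ i
    exact hPsubπ k hk (θ i) (hθ i (mem_univ i)).1 (hθ i (mem_univ i)).2
  have hlowsum : (m:ℝ) * (c / (B * (Real.sqrt d)^d))
      ≤ ∫ θ in {θ : Fin d → ℝ | ∀ i, Δ ≤ |θ i| ∧ |θ i| ≤ Real.pi}, p θ := by
    have h1 : ∫ θ in ⋃ k ∈ Finset.range m, P k, p θ
        = ∑ k ∈ Finset.range m, ∫ θ in P k, p θ :=
      integral_biUnion_finset _ (fun k _ => hPmeas k) hPdisj
        (fun k hk => (hpintA Δ hΔ).mono_set (hPsub k (Finset.mem_range.1 hk)))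
    have h2 : ∫ θ in ⋃ k ∈ Finset.range m, P k, p θ
        ≤ ∫ θ in {θ : Fin d → ℝ | ∀ i, Δ ≤ |θ i| ∧ |θ i| ≤ Real.pi}, p θ :=
      setIntegral_mono_set (hpintA Δ hΔ) (hp_nonneg_ae Δ hΔ)
        (HasSubset.Subset.eventuallyLE (iUnion₂_subset fun k hk =>
          hPsub k (Finset.mem_range.1 hk)))
    calc (m:ℝ) * (c / (B * (Real.sqrt d)^d))
        = ∑ _k ∈ Finset.range m, c / (B * (Real.sqrt d)^d) := by
          rw [Finset.sum_const, Finset.card_range, nsmul_eq_mul]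
    _ ≤ ∑ k ∈ Finset.range m, ∫ θ in P k, p θ :=
          Finset.sum_le_sum (fun k hk => hPk k (Finset.mem_range.1 hk))
    _ = ∫ θ in ⋃ k ∈ Finset.range m, P k, p θ := h1.symm
    _ ≤ _ := h2
  have hmlog : Real.log L ≤ 2 * (m:ℝ) := by
    have h3 : L < 2^(K+1) := by
      have e := Nat.lt_pow_succ_log_self (show 1 < 2 by norm_num) L
      rwa [← hK] at e
    have h4 : (L:ℝ) < 2^(K+1) := by exact_mod_cast h3
    have h5 : Real.log L < ((K:ℝ)+1) * Real.log 2 := by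
      calc Real.log L < Real.log ((2:ℝ)^(K+1)) := Real.log_lt_log hLr h4
      _ = ((K:ℝ)+1) * Real.log 2 := by rw [Real.log_pow]; push_cast; ring
    have hl2 : Real.log 2 < 1 := by nlinarith [Real.log_two_lt_d9]
    have hKm : (K:ℝ) + 1 = (m:ℝ) + 3 := by
      have e : K = m + 2 := hm2.symm
      rw [e]; push_cast; ring
    have hm3 : (3:ℝ) ≤ (m:ℝ) := by exact_mod_cast (by omega : 3 ≤ m)
    have hl2' : 0 < Real.log 2 := by nlinarith [Real.log_two_gt_d9]
    nlinarith
  have final_low : c / (2 * (Real.sqrt d)^d) * Real.log L / B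
      ≤ ∫ θ in {θ : Fin d → ℝ | ∀ i, Δ ≤ |θ i| ∧ |θ i| ≤ Real.pi}, p θ := by
    have hX : 0 < c / (2 * (Real.sqrt d)^d) :=
      div_pos hc (mul_pos two_pos (pow_pos hsd d))
    calc c / (2 * (Real.sqrt d)^d) * Real.log L / B
        ≤ c / (2 * (Real.sqrt d)^d) * (2 * (m:ℝ)) / B := by
          have hXX : c / (2 * (Real.sqrt d)^d) * Real.log L
              ≤ c / (2 * (Real.sqrt d)^d) * (2 * (m:ℝ)) :=
            mul_le_mul_of_nonneg_left hmlog hX.le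
          exact (div_le_div_iff_of_pos_right hβp).2 hXX
    _ = (m:ℝ) * (c / (B * (Real.sqrt d)^d)) := by
          field_simp [ne_of_gt hβp, ne_of_gt (pow_pos hsd d)]
    _ ≤ _ := hlowsum
  exact ⟨final_low, hmid, final_up⟩
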